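/- Let p : ℚ[k₁, g₂, g₃] → ℚ[k₁, g₂] be the ℚ-algebra homomorphism determined by k₁ ↦ k₁, g₂ ↦ g₂, g₃ ↦ 0, and let φ : ℚ[k₁, k₂, g₂, q] → ℚ[k₁, g₂] be the ℚ-algebra homomorphism determined by k₁ ↦ k₁, g₂ ↦ g₂, k₂ ↦ 2g₂ − k₁², q ↦ −g₂(k₁² − 4g₂). Let A := ℚ[k₁, g₂, g₃] ×_{ℚ[k₁,g₂]} ℚ[k₁, k₂, g₂, q] be the fiber product along p and φ. Then A is generated as a ℚ-algebra by the five elements (k₁, k₁), (g₂, g₂), (g₃, 0), (2g₂ − k₁², k₂), and (−g₂(k₁² − 4g₂), q). -/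

import Mathlib

open MvPolynomial

/-- `p : ℚ[k₁, g₂, g₃] → ℚ[k₁, g₂]`, the identity on `k₁, g₂` and `g₃ ↦ 0`
(variables: `k₁ = X 0`, `g₂ = X 1`, `g₃ = X 2` in the source, `k₁ = X 0`, `g₂ = X 1` in
the target). -/
noncomputable def pMap : MvPolynomial (Fin 3) ℚ →ₐ[ℚ] MvPolynomial (Fin 2) ℚ :=
  aeval ![X 0, X 1, 0]

/-- `φ : ℚ[k₁, k₂, g₂, q] → ℚ[k₁, g₂]`, the identity on `k₁, g₂`, with
`k₂ ↦ 2g₂ − k₁²` and `q ↦ −g₂(k₁² − 4g₂)` (variables: `k₁ = X 0`, `k₂ = X 1`,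
`g₂ = X 2`, `q = X 3` in the source). -/
noncomputable def phiMap : MvPolynomial (Fin 4) ℚ →ₐ[ℚ] MvPolynomial (Fin 2) ℚ :=
  aeval ![X 0, 2 * X 1 - X 0 ^ 2, X 1, -(X 1) * (X 0 ^ 2 - 4 * X 1)]

/-- The fiber product `A = ℚ[k₁,g₂,g₃] ×_{ℚ[k₁,g₂]} ℚ[k₁,k₂,g₂,q]` along `p` and `φ`,
as a subalgebra of the product. -/
noncomputable def fibA : Subalgebra ℚ (MvPolynomial (Fin 3) ℚ × MvPolynomial (Fin 4) ℚ) :=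
  AlgHom.equalizer (pMap.comp (AlgHom.fst ℚ _ _)) (phiMap.comp (AlgHom.snd ℚ _ _))

noncomputable def sigmaMap : MvPolynomial (Fin 4) ℚ →ₐ[ℚ] MvPolynomial (Fin 3) ℚ :=
  aeval ![X 0, 2 * X 1 - X 0 ^ 2, X 1, -(X 1) * (X 0 ^ 2 - 4 * X 1)]

noncomputable def eMap : MvPolynomial (Fin 3) ℚ →ₐ[ℚ] MvPolynomial (Fin 3) ℚ :=
  aeval ![X 0, X 1, 0]

def genSet : Set (MvPolynomial (Fin 3) ℚ × MvPolynomial (Fin 4) ℚ) :=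
  {(X 0, X 0), (X 1, X 2), (X 2, 0),
    ((2 * X 1 - X 0 ^ 2 : MvPolynomial (Fin 3) ℚ), (X 1 : MvPolynomial (Fin 4) ℚ)),
    (-(X 1) * (X 0 ^ 2 - 4 * X 1), X 3)}

noncomputable def vGen : Fin 4 → MvPolynomial (Fin 3) ℚ × MvPolynomial (Fin 4) ℚ :=
  ![(X 0, X 0), ((2 * X 1 - X 0 ^ 2 : MvPolynomial (Fin 3) ℚ), X 1),
    ((X 1 : MvPolynomial (Fin 3) ℚ), (X 2 : MvPolynomial (Fin 4) ℚ)),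
    (-(X 1) * (X 0 ^ 2 - 4 * X 1), X 3)]

noncomputable def wGen : Fin 3 → MvPolynomial (Fin 3) ℚ × MvPolynomial (Fin 4) ℚ :=
  ![(X 0, X 0), ((X 1 : MvPolynomial (Fin 3) ℚ), (X 2 : MvPolynomial (Fin 4) ℚ)),
    ((X 2 : MvPolynomial (Fin 3) ℚ), 0)]

lemma fst_pair (x : MvPolynomial (Fin 3) ℚ) (y : MvPolynomial (Fin 4) ℚ) :
    (AlgHom.fst ℚ (MvPolynomial (Fin 3) ℚ) (MvPolynomial (Fin 4) ℚ)) (x, y) = x := rfl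

lemma snd_pair (x : MvPolynomial (Fin 3) ℚ) (y : MvPolynomial (Fin 4) ℚ) :
    (AlgHom.snd ℚ (MvPolynomial (Fin 3) ℚ) (MvPolynomial (Fin 4) ℚ)) (x, y) = y := rfl

lemma X2_dvd_sub_eMap (f : MvPolynomial (Fin 3) ℚ) : X 2 ∣ f - eMap f := by
  induction f using MvPolynomial.induction_on with
  | C a => simp [eMap]
  | add p q hp hq =>
    have : p + q - eMap (p + q) = (p - eMap p) + (q - eMap q) := by
      rw [map_add]; ring
    rw [this]; exact dvd_add hp hq
  | mul_X p i hp =>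
    have h2 : X 2 ∣ X i - eMap (X i) := by
      fin_cases i <;> simp [eMap]
    have : p * X i - eMap (p * X i) =
        (p - eMap p) * X i + eMap p * (X i - eMap (X i)) := by
      rw [map_mul]; ring
    rw [this]
    exact dvd_add (Dvd.dvd.mul_right hp _) (Dvd.dvd.mul_left h2 _)

lemma pMap_sigmaMap : pMap.comp sigmaMap = phiMap := by
  apply MvPolynomial.algHom_ext
  intro i
  fin_cases i <;> simp [pMap, phiMap, sigmaMap, map_ofNat]

lemma vGen_range_subset : Set.range vGen ⊆ genSet := by
  rintro _ ⟨i, rfl⟩; fin_cases i <;> simp [vGen, genSet]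

lemma wGen_range_subset : Set.range wGen ⊆ genSet := by
  rintro _ ⟨i, rfl⟩; fin_cases i <;> simp [wGen, genSet]

lemma vGen_mem (x : MvPolynomial (Fin 4) ℚ) : aeval vGen x ∈ Algebra.adjoin ℚ genSet := by
  have hx : aeval vGen x ∈ Algebra.adjoin ℚ (Set.range vGen) := by
    rw [Algebra.adjoin_range_eq_range_aeval ℚ vGen]; exact ⟨x, rfl⟩
  exact Algebra.adjoin_mono vGen_range_subset hx

lemma wGen_mem (x : MvPolynomial (Fin 3) ℚ) : aeval wGen x ∈ Algebra.adjoin ℚ genSet := by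
  have hx : aeval wGen x ∈ Algebra.adjoin ℚ (Set.range wGen) := by
    rw [Algebra.adjoin_range_eq_range_aeval ℚ wGen]; exact ⟨x, rfl⟩
  exact Algebra.adjoin_mono wGen_range_subset hx

lemma vGen_fst (x : MvPolynomial (Fin 4) ℚ) : (aeval vGen x).1 = sigmaMap x := by
  have h : (AlgHom.fst ℚ _ _).comp (aeval vGen) = sigmaMap := by
    apply MvPolynomial.algHom_ext; intro i
    fin_cases i <;> simp [vGen, sigmaMap, fst_pair]
  exact AlgHom.congr_fun h x

lemma vGen_snd (x : MvPolynomial (Fin 4) ℚ) : (aeval vGen x).2 = x := by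
  have h : (AlgHom.snd ℚ _ _).comp (aeval vGen) = AlgHom.id ℚ _ := by
    apply MvPolynomial.algHom_ext; intro i
    fin_cases i <;> simp [vGen, snd_pair]
  exact AlgHom.congr_fun h x

lemma wGen_fst (x : MvPolynomial (Fin 3) ℚ) : (aeval wGen x).1 = x := by
  have h : (AlgHom.fst ℚ _ _).comp (aeval wGen) = AlgHom.id ℚ _ := by
    apply MvPolynomial.algHom_ext; intro i
    fin_cases i <;> simp [wGen, fst_pair]
  exact AlgHom.congr_fun h x

/-- The fiber product `A` is generated as a `ℚ`-algebra by the five elements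
`(k₁, k₁)`, `(g₂, g₂)`, `(g₃, 0)`, `(2g₂ − k₁², k₂)` and `(−g₂(k₁² − 4g₂), q)`:
the subalgebra of the product generated by these five pairs is exactly `A`. -/
theorem fiber_product_generators :
    Algebra.adjoin ℚ
      ({(X 0, X 0), (X 1, X 2), (X 2, 0),
        ((2 * X 1 - X 0 ^ 2 : MvPolynomial (Fin 3) ℚ), (X 1 : MvPolynomial (Fin 4) ℚ)),
        (-(X 1) * (X 0 ^ 2 - 4 * X 1), X 3)} :
        Set (MvPolynomial (Fin 3) ℚ × MvPolynomial (Fin 4) ℚ)) = fibA := by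
  show Algebra.adjoin ℚ genSet = fibA
  apply le_antisymm
  · rw [Algebra.adjoin_le_iff]
    rintro x hx
    simp only [genSet, Set.mem_insert_iff, Set.mem_singleton_iff] at hx
    rcases hx with h | h | h | h | h <;> subst h <;>
      simp [fibA, AlgHom.mem_equalizer, fst_pair, snd_pair, pMap, phiMap, map_ofNat]
  · rintro ⟨f, g⟩ hfg
    simp only [fibA, AlgHom.mem_equalizer, AlgHom.comp_apply, fst_pair, snd_pair] at hfg
    have hker : eMap (f - sigmaMap g) = 0 := by
      have hje : (aeval (![X 0, X 1] : Fin 2 → MvPolynomial (Fin 3) ℚ)).comp pMap = eMap := by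
        apply MvPolynomial.algHom_ext; intro i
        fin_cases i <;> simp [pMap, eMap]
      have hps : pMap (sigmaMap g) = phiMap g := AlgHom.congr_fun pMap_sigmaMap g
      have h0 : pMap (f - sigmaMap g) = 0 := by rw [map_sub, hps, hfg, sub_self]
      calc eMap (f - sigmaMap g)
          = aeval ![X 0, X 1] (pMap (f - sigmaMap g)) :=
            (AlgHom.congr_fun hje (f - sigmaMap g)).symm
        _ = 0 := by rw [h0, map_zero]
    obtain ⟨h, hh⟩ : X 2 ∣ f - sigmaMap g := by
      have := X2_dvd_sub_eMap (f - sigmaMap g)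
      rwa [hker, sub_zero] at this
    have key : (f, g) = aeval vGen g + aeval wGen h *
        ((X 2 : MvPolynomial (Fin 3) ℚ), (0 : MvPolynomial (Fin 4) ℚ)) := by
      apply Prod.ext
      · simp only [Prod.fst_add, Prod.fst_mul, vGen_fst, wGen_fst]
        have hf : f = sigmaMap g + (f - sigmaMap g) := by ring
        rw [hf, hh]; ring
      · simp only [Prod.snd_add, Prod.snd_mul, vGen_snd, mul_zero, add_zero]
    rw [key]
    refine add_mem (vGen_mem g) (mul_mem (wGen_mem h) ?_)
    exact Algebra.subset_adjoin (by simp [genSet])
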